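/- Let n ≥ 2, m ≥ 1, let φ be an endomorphism of F_n, Q an m×m integer matrix, P an n×m integer matrix, and let Ψ = Ψ_{φ,Q,P} be the endomorphism of F_n × Z^m sending u t^a to φ(u) t^{aQ+uP}. If d = det(I_m − Q) ≠ 0, then the subgroup K = {u ∈ Fix φ | there exists a ∈ Z^m with a = aQ + uP} has finite index in Fix φ, with [Fix φ : K] ≤ |d|^k where k = rk(Fix φ); consequently Fix Ψ ≅ K is a free group of finite rank. -/

import Mathlib

lemma aux_vecMul_eq_zero {m : ℕ} (M : Matrix (Fin m) (Fin m) ℤ) (hM : M.det ≠ 0)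
    {a : Fin m → ℤ} (h : Matrix.vecMul a M = 0) : a = 0 := by
  have h2 : Matrix.vecMul (Matrix.vecMul a M) M.adjugate = 0 := by
    rw [h, Matrix.zero_vecMul]
  rw [Matrix.vecMul_vecMul, Matrix.mul_adjugate] at h2
  have h4 : M.det • a = 0 := by
    ext i
    have := congrFun h2 i
    simpa [Matrix.smul_one_eq_diagonal, Matrix.vecMul_diagonal, mul_comm] using this
  rcases smul_eq_zero.mp h4 with h3 | h3
  · exact absurd h3 hM
  · exact h3

lemma aux_freeGroup_fg_finite {X : Type*} (h : Group.FG (FreeGroup X)) : Finite X := by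
  let ab : FreeGroup X →* Multiplicative (X →₀ ℤ) :=
    FreeGroup.lift fun x => Multiplicative.ofAdd (Finsupp.single x 1)
  have hsurj : Function.Surjective ab := by
    intro f
    induction f using Finsupp.induction_linear with
    | zero => exact ⟨1, map_one ab⟩
    | add f g hf hg =>
      obtain ⟨u, hu⟩ := hf; obtain ⟨v, hv⟩ := hg
      exact ⟨u * v, by rw [map_mul, hu, hv]; rfl⟩
    | single a b =>
      refine ⟨(FreeGroup.of a) ^ b, ?_⟩
      rw [map_zpow, FreeGroup.lift_apply_of, ← ofAdd_zsmul]
      simp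
      rfl
  haveI : Group.FG (Multiplicative (X →₀ ℤ)) := @Group.fg_of_surjective _ _ _ _ h _ hsurj
  haveI : AddGroup.FG (X →₀ ℤ) := AddGroup.fg_iff_mul_fg.mpr ‹_›
  haveI : Module.Finite ℤ (X →₀ ℤ) := Module.Finite.iff_addGroup_fg.mpr ‹_›
  exact Module.Finite.finite_basis (Finsupp.basisSingleOne (R := ℤ) (ι := X))



/-- The fixed subgroup of an endomorphism `φ` of a group `G`. -/
def fixedSubgroup {G : Type*} [Group G] (φ : G →* G) : Subgroup G where
  carrier := {x | φ x = x}
  one_mem' := by simp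
  mul_mem' := by
    intro a b ha hb
    simp only [Set.mem_setOf_eq, map_mul] at *
    rw [ha, hb]
  inv_mem' := by
    intro a ha
    simp only [Set.mem_setOf_eq, map_inv] at *
    rw [ha]

/-- A subgroup `H` of `G` is end-fixed up to isomorphism if `H ≅ Fix φ`
for some endomorphism `φ` of `G`. -/
def IsEndFixed {G : Type*} [Group G] (H : Subgroup G) : Prop :=
  ∃ φ : G →* G, Nonempty (H ≃* fixedSubgroup φ)

/-- A subgroup `H` of `G` is aut-fixed up to isomorphism if `H ≅ Fix φ`
for some automorphism `φ` of `G`. -/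
def IsAutFixed {G : Type*} [Group G] (H : Subgroup G) : Prop :=
  ∃ φ : G ≃* G, Nonempty (H ≃* fixedSubgroup φ.toMonoidHom)

/-- The free abelian group `ℤ^m` of rank `m`, written multiplicatively. -/
abbrev ZPowFreeAb (m : ℕ) := Multiplicative (Fin m → ℤ)

/-- The abelianization homomorphism of the free group `F_n`, with values in `ℤ^n`. -/
def freeAb (n : ℕ) : FreeGroup (Fin n) →* Multiplicative (Fin n → ℤ) :=
  FreeGroup.lift fun i => Multiplicative.ofAdd (Pi.single i 1)

/-- The abelianization vector (vector of exponent sums) of a word `u ∈ F_n`. -/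
def freeVec {n : ℕ} (u : FreeGroup (Fin n)) : Fin n → ℤ :=
  Multiplicative.toAdd (freeAb n u)

lemma freeVec_one {n : ℕ} : freeVec (1 : FreeGroup (Fin n)) = 0 := by
  simp [freeVec]

lemma freeVec_mul {n : ℕ} (u v : FreeGroup (Fin n)) :
    freeVec (u * v) = freeVec u + freeVec v := by
  simp [freeVec, map_mul]

lemma freeVec_inv {n : ℕ} (u : FreeGroup (Fin n)) : freeVec u⁻¹ = -freeVec u := by
  simp [freeVec, map_inv]

/-- The subgroup `K = {u ∈ Fix φ | ∃ a ∈ ℤ^m, a = aQ + uP}` of `F_n`. -/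
def Kgrp (n m : ℕ) (φ : FreeGroup (Fin n) →* FreeGroup (Fin n))
    (Q : Matrix (Fin m) (Fin m) ℤ) (P : Matrix (Fin n) (Fin m) ℤ) :
    Subgroup (FreeGroup (Fin n)) where
  carrier := {u | φ u = u ∧
    ∃ a : Fin m → ℤ, a = Matrix.vecMul a Q + Matrix.vecMul (freeVec u) P}
  one_mem' := ⟨map_one φ, 0, by simp [freeVec_one, Matrix.zero_vecMul]⟩
  mul_mem' := by
    rintro u v ⟨hu, au, hau⟩ ⟨hv, av, hav⟩
    refine ⟨by rw [map_mul, hu, hv], au + av, ?_⟩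
    conv_lhs => rw [hau, hav]
    rw [freeVec_mul, Matrix.add_vecMul, Matrix.add_vecMul]
    abel
  inv_mem' := by
    rintro u ⟨hu, au, hau⟩
    refine ⟨by rw [map_inv, hu], -au, ?_⟩
    conv_lhs => rw [hau]
    rw [freeVec_inv, Matrix.neg_vecMul, Matrix.neg_vecMul]
    abel

/-- The subgroup `A = {a ∈ ℤ^m | a = aQ}` of `ℤ^m`. -/
def Agrp (m : ℕ) (Q : Matrix (Fin m) (Fin m) ℤ) : Subgroup (ZPowFreeAb m) where
  carrier := {a | Multiplicative.toAdd a = Matrix.vecMul (Multiplicative.toAdd a) Q}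
  one_mem' := by simp [Matrix.zero_vecMul]
  mul_mem' := by
    intro a b ha hb
    simp only [Set.mem_setOf_eq, toAdd_mul] at *
    rw [Matrix.add_vecMul, ← ha, ← hb]
  inv_mem' := by
    intro a ha
    simp only [Set.mem_setOf_eq, toAdd_inv] at *
    rw [Matrix.neg_vecMul, ← ha]


theorem stmt8 (n m : ℕ) (hn : 2 ≤ n) (hm : 1 ≤ m)
    (φ : FreeGroup (Fin n) →* FreeGroup (Fin n))
    (Q : Matrix (Fin m) (Fin m) ℤ) (P : Matrix (Fin n) (Fin m) ℤ)
    (Ψ : (FreeGroup (Fin n) × ZPowFreeAb m) →* (FreeGroup (Fin n) × ZPowFreeAb m))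
    (hΨ : ∀ x : FreeGroup (Fin n) × ZPowFreeAb m,
      Ψ x = (φ x.1, Multiplicative.ofAdd
        (Matrix.vecMul (Multiplicative.toAdd x.2) Q + Matrix.vecMul (freeVec x.1) P)))
    (d : ℤ) (hd : d = (1 - Q).det) (hd0 : d ≠ 0)
    (k : ℕ) (hk : Nonempty (fixedSubgroup φ ≃* FreeGroup (Fin k))) :
    ((Kgrp n m φ Q P).subgroupOf (fixedSubgroup φ)).index ≠ 0 ∧
    ((Kgrp n m φ Q P).subgroupOf (fixedSubgroup φ)).index ≤ d.natAbs ^ k ∧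
    Nonempty (fixedSubgroup Ψ ≃* Kgrp n m φ Q P) ∧
    ∃ r : ℕ, Nonempty (Kgrp n m φ Q P ≃* FreeGroup (Fin r)) := by

  obtain ⟨e⟩ := hk
  set D := d.natAbs with hDdef
  have hD0 : D ≠ 0 := Int.natAbs_ne_zero.mpr hd0
  haveI : NeZero D := ⟨hD0⟩
  have hdet : (1 - Q).det ≠ 0 := by rw [← hd]; exact hd0
  set L : Submodule ℤ (Fin m → ℤ) := LinearMap.range (Matrix.vecMulLinear (1 - Q)) with hLdef
  set π : (Fin n → ℤ) →ₗ[ℤ] ((Fin m → ℤ) ⧸ L) := L.mkQ.comp (Matrix.vecMulLinear P) with hπdef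
  set g0 : FreeGroup (Fin n) →* Multiplicative ((Fin m → ℤ) ⧸ L) :=
    (AddMonoidHom.toMultiplicative π.toAddMonoidHom).comp (freeAb n) with hg0def
  have hg0 : ∀ u : FreeGroup (Fin n),
      g0 u = Multiplicative.ofAdd
        (Submodule.Quotient.mk (Matrix.vecMul (freeVec u) P)) := fun u => rfl
  set g : ↥(fixedSubgroup φ) →* Multiplicative ((Fin m → ℤ) ⧸ L) :=
    g0.comp (fixedSubgroup φ).subtype with hgdef
  have hiff : ∀ (a w : Fin m → ℤ),
      (a = Matrix.vecMul a Q + w) ↔ Matrix.vecMul a (1 - Q) = w := by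
    intro a w
    rw [Matrix.vecMul_sub, Matrix.vecMul_one, sub_eq_iff_eq_add']
  have hker : (Kgrp n m φ Q P).subgroupOf (fixedSubgroup φ) = g.ker := by
    ext x
    simp only [Subgroup.mem_subgroupOf, MonoidHom.mem_ker]
    have hmem : (x : FreeGroup (Fin n)) ∈ Kgrp n m φ Q P ↔
        (φ (x : FreeGroup (Fin n)) = (x : FreeGroup (Fin n)) ∧
         ∃ a : Fin m → ℤ, a = Matrix.vecMul a Q + Matrix.vecMul (freeVec (x:FreeGroup (Fin n))) P) :=
      Iff.rfl
    rw [hmem]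
    have hgx : g x = g0 (x : FreeGroup (Fin n)) := rfl
    rw [hgx, hg0, ofAdd_eq_one, Submodule.Quotient.mk_eq_zero]
    constructor
    · rintro ⟨-, a, ha⟩
      exact ⟨a, by rw [Matrix.vecMulLinear_apply]; exact (hiff a _).mp ha⟩
    · rintro ⟨a, ha⟩
      rw [Matrix.vecMulLinear_apply] at ha
      exact ⟨x.2, a, (hiff a _).mpr ha⟩
  have hexp : ∀ y : (Fin m → ℤ) ⧸ L, ((D : ℤ)) • y = 0 := by
    intro y
    obtain ⟨x, rfl⟩ := Submodule.Quotient.mk_surjective L y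
    rw [← Submodule.Quotient.mk_smul, Submodule.Quotient.mk_eq_zero]
    have hdL : d • x ∈ L := by
      refine ⟨Matrix.vecMul x (1 - Q).adjugate, ?_⟩
      rw [Matrix.vecMulLinear_apply, Matrix.vecMul_vecMul, Matrix.adjugate_mul, ← hd]
      ext i
      simp [Matrix.smul_one_eq_diagonal, Matrix.vecMul_diagonal, mul_comm]
    rcases Int.natAbs_eq d with hcase | hcase
    · rw [hDdef, ← hcase]; exact hdL
    · have : ((D : ℤ)) • x = -(d • x) := by
        rw [← neg_smul]; congr 1; omega
      rw [this]; exact neg_mem hdL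
  set h : FreeGroup (Fin k) →* Multiplicative ((Fin m → ℤ) ⧸ L) :=
    g.comp e.symm.toMonoidHom with hhdef
  set v : Fin k → ((Fin m → ℤ) ⧸ L) := fun i => Multiplicative.toAdd (h (FreeGroup.of i))
    with hvdef
  have hvD : ∀ i, zmultiplesHom _ (v i) ((D : ℕ) : ℤ) = 0 := fun i => hexp (v i)
  set S : (Fin k → ZMod D) →+ ((Fin m → ℤ) ⧸ L) :=
    ∑ i : Fin k, (ZMod.lift D ⟨zmultiplesHom _ (v i), hvD i⟩).comp
      (Pi.evalAddMonoidHom (fun _ : Fin k => ZMod D) i) with hSdef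
  have hSsingle : ∀ i : Fin k, S (Pi.single i (1 : ZMod D)) = v i := by
    intro i
    rw [hSdef, AddMonoidHom.finset_sum_apply]
    rw [Finset.sum_eq_single i]
    · rw [AddMonoidHom.comp_apply]
      have harg : Pi.evalAddMonoidHom (fun _ : Fin k => ZMod D) i (Pi.single i (1 : ZMod D))
          = ((1 : ℤ) : ZMod D) := by
        have h0 : Pi.evalAddMonoidHom (fun _ : Fin k => ZMod D) i (Pi.single i (1 : ZMod D))
            = (1 : ZMod D) := Pi.single_eq_same (M := fun _ : Fin k => ZMod D) i 1
        rw [h0]; norm_cast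
      rw [harg, ZMod.lift_coe]
      exact one_smul _ _
    · intro j _ hj
      rw [AddMonoidHom.comp_apply]
      have harg : Pi.evalAddMonoidHom (fun _ : Fin k => ZMod D) j (Pi.single i (1 : ZMod D))
          = 0 := Pi.single_eq_of_ne (M := fun _ : Fin k => ZMod D) hj 1
      rw [harg, map_zero]
    · intro hi; exact absurd (Finset.mem_univ i) hi
  set S' : Multiplicative (Fin k → ZMod D) →* Multiplicative ((Fin m → ℤ) ⧸ L) :=
    AddMonoidHom.toMultiplicative S with hS'def
  have key : ∀ w : FreeGroup (Fin k), h w ∈ S'.range := by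
    have htop : (⊤ : Subgroup (FreeGroup (Fin k))) ≤ Subgroup.comap h S'.range := by
      rw [← FreeGroup.closure_range_of (Fin k), Subgroup.closure_le]
      rintro _ ⟨i, rfl⟩
      rw [SetLike.mem_coe, Subgroup.mem_comap]
      refine ⟨Multiplicative.ofAdd (Pi.single i (1 : ZMod D)), ?_⟩
      show Multiplicative.ofAdd (S (Pi.single i (1 : ZMod D))) = h (FreeGroup.of i)
      rw [hSsingle i, hvdef]
      exact ofAdd_toAdd _
    intro w; exact htop (Subgroup.mem_top w)
  have hrange : ∀ y : ↥(fixedSubgroup φ), g y ∈ S'.range := by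
    intro y
    have hy : g y = h (e y) := by
      rw [hhdef]
      show g y = g (e.symm (e y))
      rw [e.symm_apply_apply]
    rw [hy]; exact key (e y)
  haveI : Finite (Multiplicative (Fin k → ZMod D)) := by
    unfold Multiplicative; infer_instance
  have hfinS : (S'.range : Set (Multiplicative ((Fin m → ℤ) ⧸ L))).Finite := by
    rw [MonoidHom.coe_range]; exact Set.finite_range _
  have hsub : (g.range : Set (Multiplicative ((Fin m → ℤ) ⧸ L))) ⊆ (S'.range : Set _) := by
    rintro x ⟨y, rfl⟩; exact hrange y
  haveI hfinrange : Finite ↥g.range := Set.Finite.to_subtype (hfinS.subset hsub)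
  have hcard1 : Nat.card ↥g.range ≤ Nat.card ↥S'.range := Nat.card_mono hfinS hsub
  have hcard2 : Nat.card ↥S'.range ≤ D ^ k := by
    have h1 : Nat.card ↥S'.range ≤ Nat.card (Multiplicative (Fin k → ZMod D)) :=
      Nat.card_le_card_of_surjective _ S'.rangeRestrict_surjective
    have h2 : Nat.card (Multiplicative (Fin k → ZMod D)) = D ^ k := by
      rw [Nat.card_congr Multiplicative.toAdd, Nat.card_fun, Nat.card_zmod,
        Nat.card_eq_fintype_card, Fintype.card_fin]
    omega
  have hindex : ((Kgrp n m φ Q P).subgroupOf (fixedSubgroup φ)).index = Nat.card ↥g.range := by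
    rw [hker, Subgroup.index_ker]
  have hne : ((Kgrp n m φ Q P).subgroupOf (fixedSubgroup φ)).index ≠ 0 := by
    rw [hindex]
    exact Nat.card_ne_zero.mpr ⟨⟨⟨1, one_mem _⟩⟩, hfinrange⟩
  refine ⟨hne, by rw [hindex]; exact le_trans hcard1 hcard2, ⟨?_⟩, ?_⟩
  · -- Fix Ψ ≃* K
    have memK : ∀ x : ↥(fixedSubgroup Ψ),
        (x : FreeGroup (Fin n) × ZPowFreeAb m).1 ∈ Kgrp n m φ Q P := by
      intro x
      have hx : Ψ (x : FreeGroup (Fin n) × ZPowFreeAb m) = (x : FreeGroup (Fin n) × ZPowFreeAb m) := x.2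
      rw [hΨ] at hx
      refine ⟨congrArg Prod.fst hx, Multiplicative.toAdd (x : FreeGroup (Fin n) × ZPowFreeAb m).2, ?_⟩
      have h2 := congrArg (fun p : FreeGroup (Fin n) × ZPowFreeAb m => Multiplicative.toAdd p.2) hx
      exact h2.symm
    set F : ↥(fixedSubgroup Ψ) →* ↥(Kgrp n m φ Q P) :=
      ((MonoidHom.fst _ _).comp (fixedSubgroup Ψ).subtype).codRestrict _ memK with hFdef
    have hFbij : Function.Bijective F := by
      constructor
      · intro x y hxy
        have h1 : (x : FreeGroup (Fin n) × ZPowFreeAb m).1 = (y : FreeGroup (Fin n) × ZPowFreeAb m).1 :=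
          congrArg Subtype.val hxy
        have hx : Ψ (x : FreeGroup (Fin n) × ZPowFreeAb m) = (x : FreeGroup (Fin n) × ZPowFreeAb m) := x.2
        have hy : Ψ (y : FreeGroup (Fin n) × ZPowFreeAb m) = (y : FreeGroup (Fin n) × ZPowFreeAb m) := y.2
        rw [hΨ] at hx hy
        set a := Multiplicative.toAdd (x : FreeGroup (Fin n) × ZPowFreeAb m).2 with hadef
        set b := Multiplicative.toAdd (y : FreeGroup (Fin n) × ZPowFreeAb m).2 with hbdef
        have hxa : Matrix.vecMul a Q
            + Matrix.vecMul (freeVec (x : FreeGroup (Fin n) × ZPowFreeAb m).1) P = a :=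
          congrArg (fun p : FreeGroup (Fin n) × ZPowFreeAb m => Multiplicative.toAdd p.2) hx
        have hyb : Matrix.vecMul b Q
            + Matrix.vecMul (freeVec (y : FreeGroup (Fin n) × ZPowFreeAb m).1) P = b :=
          congrArg (fun p : FreeGroup (Fin n) × ZPowFreeAb m => Multiplicative.toAdd p.2) hy
        rw [← h1] at hyb
        have hab : Matrix.vecMul (a - b) (1 - Q) = 0 := by
          rw [Matrix.vecMul_sub, Matrix.vecMul_one, Matrix.sub_vecMul]
          have : a - b = Matrix.vecMul a Q - Matrix.vecMul b Q := by
            conv_lhs => rw [← hxa, ← hyb]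
            abel
          rw [← this, sub_self]
        have hab0 : a - b = 0 := aux_vecMul_eq_zero _ hdet hab
        have h2 : (x : FreeGroup (Fin n) × ZPowFreeAb m).2 = (y : FreeGroup (Fin n) × ZPowFreeAb m).2 := by
          exact Multiplicative.toAdd.injective (sub_eq_zero.mp hab0)
        exact Subtype.ext (Prod.ext h1 h2)
      · rintro ⟨u, hu⟩
        obtain ⟨h1, a, ha⟩ := hu
        have hfix : Ψ (u, Multiplicative.ofAdd a) = (u, Multiplicative.ofAdd a) := by
          rw [hΨ]
          refine Prod.ext h1 ?_
          show Multiplicative.ofAdd (Matrix.vecMul a Q + Matrix.vecMul (freeVec u) P)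
            = Multiplicative.ofAdd a
          exact congrArg Multiplicative.ofAdd ha.symm
        exact ⟨⟨(u, Multiplicative.ofAdd a), hfix⟩, Subtype.ext rfl⟩
    exact MulEquiv.ofBijective F hFbij
  · -- K free of finite rank
    have hle : Kgrp n m φ Q P ≤ fixedSubgroup φ := fun u hu => hu.1
    have eqiv1 : Kgrp n m φ Q P ≃* ((Kgrp n m φ Q P).subgroupOf (fixedSubgroup φ)) :=
      (Subgroup.subgroupOfEquivOfLe hle).symm
    set H2 := ((Kgrp n m φ Q P).subgroupOf (fixedSubgroup φ)).map e.toMonoidHom with hH2def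
    have eqiv2 : ((Kgrp n m φ Q P).subgroupOf (fixedSubgroup φ)) ≃* H2 :=
      e.subgroupMap _
    haveI : Group.FG (FreeGroup (Fin k)) :=
      Group.fg_iff.mpr ⟨Set.range FreeGroup.of, FreeGroup.closure_range_of _, Set.finite_range _⟩
    have hneidx : H2.index ≠ 0 := by
      rw [hH2def, Subgroup.index_map_eq _ e.surjective
        (by rw [(MonoidHom.ker_eq_bot_iff _).mpr e.injective]; exact bot_le)]
      exact hne
    haveI : H2.FiniteIndex := ⟨hneidx⟩
    haveI : Group.FG ↥H2 := Subgroup.fg_of_index_ne_zero H2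
    haveI : IsFreeGroup ↥H2 := inferInstance
    have hfg : Group.FG (FreeGroup (IsFreeGroup.Generators ↥H2)) :=
      Group.fg_of_surjective (f := (IsFreeGroup.toFreeGroup (G := ↥H2)).toMonoidHom)
        (IsFreeGroup.toFreeGroup (G := ↥H2)).surjective
    haveI : Finite (IsFreeGroup.Generators ↥H2) := aux_freeGroup_fg_finite hfg
    haveI : Fintype (IsFreeGroup.Generators ↥H2) := Fintype.ofFinite _
    refine ⟨Fintype.card (IsFreeGroup.Generators ↥H2), ⟨?_⟩⟩
    exact ((eqiv1.trans eqiv2).trans (IsFreeGroup.toFreeGroup (G := ↥H2))).trans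
      (FreeGroup.freeGroupCongr (Fintype.equivFin _))
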